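/- There exists β > 0 such that for every x ∈ ℝ^d with all coordinates nonnegative, ⟨B(x) − D(x), x − x*⟩ ≤ −β·‖x‖·‖x − x*‖². -/

import Mathlib

open scoped BigOperators RealInnerProductSpace

noncomputable section

namespace LVExample

variable {d : ℕ}

/-- `S(x) = Σ_j x_j`. -/
def Svec (x : EuclideanSpace ℝ (Fin d)) : ℝ := ∑ j, x j

/-- The birth vector field `B_j(x) = λ·S(x)`. -/
def Bvec (lam : ℝ) (x : EuclideanSpace ℝ (Fin d)) : EuclideanSpace ℝ (Fin d) :=
  WithLp.toLp 2 fun _ => lam * Svec x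

/-- The death vector field `D_j(x) = x_j·(μ + κ·S(x))`. -/
def Dvec (mu kappa : ℝ) (x : EuclideanSpace ℝ (Fin d)) : EuclideanSpace ℝ (Fin d) :=
  WithLp.toLp 2 fun j => x j * (mu + kappa * Svec x)

/-- The fixed point `x*` with `x*_j = S*/d` where `S* = (λ·d − μ)/κ`. -/
def xstar (d : ℕ) (lam mu kappa : ℝ) : EuclideanSpace ℝ (Fin d) :=
  WithLp.toLp 2 fun _ => ((lam * d - mu) / kappa) / d

end LVExample

open LVExample

/-- for the example, there exists `β > 0` such that for every `x` in the
nonnegative orthant, `⟨B(x) − D(x), x − x*⟩ ≤ −β·‖x‖·‖x − x*‖²`. -/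
theorem lv_example_hypothesis_H3 (d : ℕ) (hd : 1 ≤ d) (lam mu kappa : ℝ)
    (hkappa : 0 < kappa) (hmu : 0 < mu / d) (hlam : mu / d < lam) :
    ∃ β : ℝ, 0 < β ∧ ∀ x : EuclideanSpace ℝ (Fin d), (∀ i, 0 ≤ x i) →
      ⟪Bvec lam x - Dvec mu kappa x, x - xstar d lam mu kappa⟫
        ≤ -β * ‖x‖ * ‖x - xstar d lam mu kappa‖ ^ 2 := by
  refine ⟨kappa, hkappa, ?_⟩
  intro x hx
  have hd0 : (0:ℝ) < d := by exact_mod_cast Nat.lt_of_lt_of_le Nat.zero_lt_one hd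
  set c : ℝ := ((lam * d - mu) / kappa) / d with hc
  have hkc : kappa * c = lam - mu / d := by
    rw [hc]; field_simp
  set S : ℝ := ∑ j, x j with hSdef
  have hS0 : 0 ≤ S := Finset.sum_nonneg fun i _ => hx i
  set T : ℝ := ∑ j, (x j - c)^2 with hTdef
  have hT0 : 0 ≤ T := Finset.sum_nonneg fun i _ => sq_nonneg _
  have hQ : ∑ j, (x j - c) = S - d * c := by
    rw [Finset.sum_sub_distrib, Finset.sum_const]
    simp [hSdef, mul_comm]
  -- norm of x - xstar
  have hnormy : ‖x - xstar d lam mu kappa‖ ^ 2 = T := by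
    rw [← real_inner_self_eq_norm_sq]
    simp only [PiLp.inner_apply, PiLp.sub_apply, RCLike.inner_apply, conj_trivial, hTdef,
      xstar]
    exact Finset.sum_congr rfl fun j _ => by ring
  -- ‖x‖ ≤ S
  have hnx2 : ‖x‖ ^ 2 ≤ S ^ 2 := by
    rw [← real_inner_self_eq_norm_sq]
    simp only [PiLp.inner_apply, RCLike.inner_apply, conj_trivial]
    calc ∑ j, x j * x j = ∑ j, (x j) ^ 2 := by
          exact Finset.sum_congr rfl fun j _ => (sq (x j)).symm
      _ ≤ (∑ j, x j) ^ 2 := Finset.sum_sq_le_sq_sum_of_nonneg fun i _ => hx i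
  have hnx : ‖x‖ ≤ S := by
    nlinarith [norm_nonneg x]
  -- Cauchy-Schwarz: (S - d*c)^2 ≤ d * T
  have hCS : (S - d * c) ^ 2 ≤ d * T := by
    have := sq_sum_le_card_mul_sum_sq (s := (Finset.univ : Finset (Fin d)))
      (f := fun j => x j - c)
    simpa [hQ, hTdef] using this
  -- compute the inner product
  have hinner : ⟪Bvec lam x - Dvec mu kappa x, x - xstar d lam mu kappa⟫
      = (lam * S - (mu + kappa * S) * c) * (S - d * c) - (mu + kappa * S) * T := by
    simp only [PiLp.inner_apply, PiLp.sub_apply, RCLike.inner_apply, conj_trivial,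
      Bvec, Dvec, xstar, Svec, ← hSdef, ← hc]
    have : ∀ j : Fin d, (lam * S - x j * (mu + kappa * S)) * (x j - c)
        = (lam * S - (mu + kappa * S) * c) * (x j - c)
          - (mu + kappa * S) * (x j - c) ^ 2 := fun j => by ring
    rw [Finset.sum_congr rfl fun j _ => (mul_comm _ _).trans (this j), Finset.sum_sub_distrib,
      ← Finset.mul_sum, ← Finset.mul_sum, hQ, ← hTdef]
  have hA : lam * S - (mu + kappa * S) * c = (mu / d) * (S - d * c) := by
    have : kappa * c = lam - mu / d := hkc
    have hd' : (d:ℝ) ≠ 0 := ne_of_gt hd0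
    field_simp at this ⊢
    nlinarith [this]
  rw [hinner, hA, hnormy]
  have h1 : (mu / d) * (S - d * c) ^ 2 ≤ mu * T := by
    calc (mu / d) * (S - d * c) ^ 2 ≤ (mu / d) * (d * T) :=
          mul_le_mul_of_nonneg_left hCS (le_of_lt hmu)
      _ = mu * T := by field_simp
  have h2 : kappa * ‖x‖ * T ≤ kappa * S * T := by
    have := mul_le_mul_of_nonneg_right (mul_le_mul_of_nonneg_left hnx (le_of_lt hkappa)) hT0
    linarith
  nlinarith [h1, h2]
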